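/- (Amdeberhan's identity) For every integer n ≥ 0, (2n/(n+3))·C_{n+1} = ∑_{0 ≤ k ≤ (n-1)/2} 2^{n-2k} · C(n, 2k+1) · C_k · (2k+1)/(k+2), as an identity of rational numbers, where the sum is over integers k with 0 ≤ k ≤ (n-1)/2. -/

import Mathlib

/-- The summand of Amdeberhan's identity. -/
noncomputable def amdT (n k : ℕ) : ℚ :=
  2 ^ (n - 2 * k) * (n.choose (2 * k + 1) : ℚ) * (catalan k : ℚ) * (2 * k + 1) / (k + 2)

/-- The Zeilberger certificate. -/
noncomputable def amdG (n k : ℕ) : ℚ :=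
  -8 * k * (n + 1) * 2 ^ (n - 2 * k) * (n.choose (2 * k) : ℚ) * (catalan k : ℚ)

lemma cat_rec (k : ℕ) : ((k : ℚ) + 2) * catalan (k + 1) = 2 * (2 * k + 1) * catalan k := by
  have h1 := succ_mul_catalan_eq_centralBinom (k + 1)
  have h2 := Nat.succ_mul_centralBinom_succ k
  have h3 := succ_mul_catalan_eq_centralBinom k
  have hk : ((k : ℚ) + 1) ≠ 0 := by positivity
  have h1' : ((k : ℚ) + 1 + 1) * catalan (k + 1) = (Nat.centralBinom (k + 1) : ℚ) := by
    exact_mod_cast congrArg (Nat.cast : ℕ → ℚ) h1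
  have h2' : ((k : ℚ) + 1) * (Nat.centralBinom (k + 1) : ℚ)
      = 2 * (2 * k + 1) * (Nat.centralBinom k : ℚ) := by
    exact_mod_cast congrArg (Nat.cast : ℕ → ℚ) h2
  have h3' : ((k : ℚ) + 1) * (catalan k : ℚ) = (Nat.centralBinom k : ℚ) := by
    exact_mod_cast congrArg (Nat.cast : ℕ → ℚ) h3
  apply mul_left_cancel₀ hk
  calc ((k : ℚ) + 1) * (((k : ℚ) + 2) * catalan (k + 1))
      = ((k : ℚ) + 1) * (((k : ℚ) + 1 + 1) * catalan (k + 1)) := by ring_nf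
    _ = ((k : ℚ) + 1) * (Nat.centralBinom (k + 1) : ℚ) := by rw [h1']
    _ = 2 * (2 * k + 1) * (Nat.centralBinom k : ℚ) := h2'
    _ = 2 * (2 * k + 1) * (((k : ℚ) + 1) * (catalan k : ℚ)) := by rw [h3']
    _ = ((k : ℚ) + 1) * (2 * (2 * k + 1) * (catalan k : ℚ)) := by ring

lemma amd_key (n k : ℕ) :
    (n : ℚ) * (n + 4) * amdT (n + 1) k - 2 * (n + 1) * (2 * n + 3) * amdT n k
      = amdG n (k + 1) - amdG n k := by
  have hk2 : (k : ℚ) + 2 ≠ 0 := by positivity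
  rcases lt_trichotomy n (2 * k) with h | h | h
  · -- 2k > n : everything is zero
    have e1 : n.choose (2 * k + 1) = 0 := Nat.choose_eq_zero_of_lt (by omega)
    have e2 : (n + 1).choose (2 * k + 1) = 0 := Nat.choose_eq_zero_of_lt (by omega)
    have e3 : n.choose (2 * k) = 0 := Nat.choose_eq_zero_of_lt (by omega)
    have e4 : n.choose (2 * (k + 1)) = 0 := Nat.choose_eq_zero_of_lt (by omega)
    simp [amdT, amdG, e1, e2, e3, e4]
  · -- n = 2k
    subst h
    have e1 : (2 * k).choose (2 * k + 1) = 0 := Nat.choose_eq_zero_of_lt (by omega)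
    have e2 : (2 * k + 1).choose (2 * k + 1) = 1 := Nat.choose_self _
    have e3 : (2 * k).choose (2 * k) = 1 := Nat.choose_self _
    have e4 : (2 * k).choose (2 * (k + 1)) = 0 := Nat.choose_eq_zero_of_lt (by omega)
    have x1 : 2 * k + 1 - 2 * k = 1 := by omega
    have x2 : 2 * k - 2 * k = 0 := by omega
    simp only [amdT, amdG, e1, e2, e3, e4, x1, x2]
    push_cast
    field_simp
    ring
  · rcases Nat.lt_or_ge n (2 * k + 2) with h' | h'
    · -- n = 2k + 1
      have hn : n = 2 * k + 1 := by omega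
      subst hn
      have e2 : (2 * k + 1 + 1).choose (2 * k + 1)
          = (2 * k + 1).choose (2 * k) + (2 * k + 1).choose (2 * k + 1) :=
        Nat.choose_succ_succ _ _
      have e1 : (2 * k + 1).choose (2 * k + 1) = 1 := Nat.choose_self _
      have e3 : (2 * k + 1).choose (2 * k) = 2 * k + 1 := by
        have := Nat.choose_symm (n := 2 * k + 1) (k := 1) (by omega)
        simpa [Nat.choose_one_right] using this.symm
      have e4 : (2 * k + 1).choose (2 * (k + 1)) = 0 := Nat.choose_eq_zero_of_lt (by omega)
      have x1 : 2 * k + 1 + 1 - 2 * k = 2 := by omega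
      have x2 : 2 * k + 1 - 2 * k = 1 := by omega
      simp only [amdT, amdG, e1, e2, e3, e4, x1, x2]
      push_cast
      field_simp
      ring
    · -- n ≥ 2k + 2 : generic case
      obtain ⟨m, hm⟩ : ∃ m, n = 2 * k + 2 + m := ⟨n - (2 * k + 2), by omega⟩
      subst hm
      have h1n : (2 * k + 2 + m).choose (2 * k + 1) * (2 * k + 1)
          = (2 * k + 2 + m).choose (2 * k) * (m + 2) := by
        have := Nat.choose_succ_right_eq (2 * k + 2 + m) (2 * k)
        rwa [show 2 * k + 2 + m - 2 * k = m + 2 by omega] at this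
      have h2n : (2 * k + 2 + m).choose (2 * k + 2) * (2 * k + 2)
          = (2 * k + 2 + m).choose (2 * k + 1) * (m + 1) := by
        have := Nat.choose_succ_right_eq (2 * k + 2 + m) (2 * k + 1)
        rwa [show 2 * k + 2 + m - (2 * k + 1) = m + 1 by omega] at this
      have h0n : (2 * k + 2 + m + 1).choose (2 * k + 1)
          = (2 * k + 2 + m).choose (2 * k) + (2 * k + 2 + m).choose (2 * k + 1) :=
        Nat.choose_succ_succ _ _
      have h1 : ((2 * k + 2 + m).choose (2 * k + 1) : ℚ) * (2 * k + 1)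
          = ((2 * k + 2 + m).choose (2 * k) : ℚ) * (m + 2) := by
        exact_mod_cast congrArg (Nat.cast : ℕ → ℚ) h1n
      have h2 : ((2 * k + 2 + m).choose (2 * k + 2) : ℚ) * (2 * k + 2)
          = ((2 * k + 2 + m).choose (2 * k + 1) : ℚ) * (m + 1) := by
        exact_mod_cast congrArg (Nat.cast : ℕ → ℚ) h2n
      have h3 := cat_rec k
      have x1 : 2 * k + 2 + m + 1 - 2 * k = m + 3 := by omega
      have x2 : 2 * k + 2 + m - 2 * k = m + 2 := by omega
      have x3 : 2 * k + 2 + m - 2 * (k + 1) = m := by omega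
      have x4 : 2 * (k + 1) = 2 * k + 2 := by omega
      have x3' : 2 * k + 2 + m - (2 * k + 2) = m := by omega
      simp only [amdT, amdG, x3, x1, x2, x4, x3', h0n]
      push_cast
      rw [← mul_div_assoc, ← mul_div_assoc, div_sub_div_same, div_eq_iff hk2]
      linear_combination
        ((8 * ((2 * (k : ℚ) + 2 + m)) * (2 * (k : ℚ) + 2 + m + 4)
            - 8 * (2 * (k : ℚ) + 2 + m + 1) * (2 * (2 * (k : ℚ) + 2 + m) + 3)
            + 8 * (2 * (k : ℚ) + 2 + m + 1) * ((m : ℚ) + 1))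
          * 2 ^ m * (catalan k : ℚ)) * h1
        + (8 * (2 * (k : ℚ) + 2 + m + 1) * (2 * (k : ℚ) + 1) * 2 ^ m * (catalan k : ℚ)) * h2
        + (8 * ((k : ℚ) + 1) * (2 * (k : ℚ) + 2 + m + 1) * 2 ^ m
            * ((2 * k + 2 + m).choose (2 * k + 2) : ℚ)) * h3

lemma amd_sum_full (n : ℕ) :
    ∑ k ∈ Finset.range ((n + 1) / 2),
        2 ^ (n - 2 * k) * (n.choose (2 * k + 1) : ℚ) * (catalan k : ℚ) *
          (2 * k + 1) / (k + 2)
      = ∑ k ∈ Finset.range (n + 1), amdT n k := by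
  apply Finset.sum_subset (Finset.range_subset_range.2 (by omega))
  intro k _ hk
  rw [Finset.mem_range, not_lt] at hk
  have : n.choose (2 * k + 1) = 0 := Nat.choose_eq_zero_of_lt (by omega)
  simp [amdT, this]

lemma amd_rec (n : ℕ) :
    (n : ℚ) * (n + 4) * (∑ k ∈ Finset.range (n + 2), amdT (n + 1) k)
      = 2 * (n + 1) * (2 * n + 3) * (∑ k ∈ Finset.range (n + 1), amdT n k) := by
  have htop : amdT (n + 1) (n + 1) = 0 := by
    have : (n + 1).choose (2 * (n + 1) + 1) = 0 := Nat.choose_eq_zero_of_lt (by omega)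
    simp [amdT, this]
  rw [Finset.sum_range_succ, htop, add_zero, ← sub_eq_zero, Finset.mul_sum, Finset.mul_sum,
    ← Finset.sum_sub_distrib]
  have : ∀ k ∈ Finset.range (n + 1),
      (n : ℚ) * (n + 4) * amdT (n + 1) k - 2 * (n + 1) * (2 * n + 3) * amdT n k
        = amdG n (k + 1) - amdG n k := fun k _ => amd_key n k
  rw [Finset.sum_congr rfl this, Finset.sum_range_sub]
  have hG1 : amdG n (n + 1) = 0 := by
    have : n.choose (2 * (n + 1)) = 0 := Nat.choose_eq_zero_of_lt (by omega)
    simp [amdG, this]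
  have hG0 : amdG n 0 = 0 := by simp [amdG]
  rw [hG1, hG0, sub_zero]

/-- Amdeberhan's identity: for every `n ≥ 0`,
`(2n/(n+3)) * C (n+1) = ∑_{0 ≤ k, 2k+1 ≤ n} 2^(n-2k) * (n choose (2k+1)) * C k * (2k+1)/(k+2)`,
as an identity of rational numbers. The sum is over integers `k` with `0 ≤ k` and `2k+1 ≤ n`,
i.e. `k < (n+1)/2`. -/
theorem amdeberhan_identity (n : ℕ) :
    (2 * n / (n + 3) : ℚ) * (catalan (n + 1) : ℚ) =
      ∑ k ∈ Finset.range ((n + 1) / 2),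
        2 ^ (n - 2 * k) * (n.choose (2 * k + 1) : ℚ) * (catalan k : ℚ) *
          (2 * k + 1) / (k + 2) := by
  induction n with
  | zero => simp
  | succ n ih =>
    rcases Nat.eq_zero_or_pos n with hn | hn
    · subst hn
      rw [show (1 + 1) / 2 = 1 by norm_num, Finset.sum_range_one]
      norm_num [catalan_two]
    · rw [amd_sum_full] at ih ⊢
      have hrec := amd_rec n
      rw [← ih] at hrec
      have hn0 : (n : ℚ) ≠ 0 := by positivity
      have hn4 : (n : ℚ) + 4 ≠ 0 := by positivity
      have hn3 : (n : ℚ) + 3 ≠ 0 := by positivity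
      have hc := cat_rec (n + 1)
      push_cast at hc
      apply mul_left_cancel₀ (mul_ne_zero hn0 hn4)
      rw [hrec]
      push_cast
      field_simp
      linear_combination ((n : ℚ) + 4) * hc
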